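/- Let G be a p×m matrix over a ring R and let 𝒦 be an additive subgroup (submodule) of m×p matrices that is closed under the closed-loop map, i.e., for every K ∈ 𝒦 with I−GK invertible, −K(I−GK)⁻¹ ∈ 𝒦 and K(I−GK)⁻¹ ∈ 𝒦 when defined, assuming h_G(𝒦)=𝒦. Then: (i) if K ∈ 𝒦 and I−GK is invertible, the parameter Y := K(I−GK)⁻¹ lies in 𝒦; (ii) conversely, if Y ∈ 𝒦 and I+GY is invertible, then K := Y(I+GY)⁻¹ lies in 𝒦 and satisfies I−GK invertible with K(I−GK)⁻¹ = Y. -/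

import Mathlib

theorem qi_subspace_parameter_equivalence {R : Type*} [Ring R] {p m : ℕ}
    (G : Matrix (Fin p) (Fin m) R)
    (𝒦 : AddSubgroup (Matrix (Fin m) (Fin p) R))
    (hQI : ∀ K ∈ 𝒦, IsUnit (1 - G * K) → -(K * Ring.inverse (1 - G * K)) ∈ 𝒦) :
    (∀ K ∈ 𝒦, IsUnit (1 - G * K) → K * Ring.inverse (1 - G * K) ∈ 𝒦) ∧
    (∀ Y ∈ 𝒦, IsUnit (1 + G * Y) →
      Y * Ring.inverse (1 + G * Y) ∈ 𝒦 ∧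
      IsUnit (1 - G * (Y * Ring.inverse (1 + G * Y))) ∧
      (Y * Ring.inverse (1 + G * Y)) *
        Ring.inverse (1 - G * (Y * Ring.inverse (1 + G * Y))) = Y) := by
  constructor
  · intro K hK hu
    simpa using 𝒦.neg_mem (hQI K hK hu)
  · intro Y hY hu
    have hmem : Y * Ring.inverse (1 + G * Y) ∈ 𝒦 := by
      have h := hQI (-Y) (𝒦.neg_mem hY)
        (by simpa [mul_neg, sub_neg_eq_add] using hu)
      simpa [mul_neg, sub_neg_eq_add, neg_mul] using h
    set v := Ring.inverse (1 + G * Y) with hv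
    have huu : (1 + G * Y) * v = 1 := Ring.mul_inverse_cancel _ hu
    have hvu : v * (1 + G * Y) = 1 := Ring.inverse_mul_cancel _ hu
    have key : 1 - G * (Y * v) = v := by
      have h1 : G * (Y * v) = (G * Y) * v := (Matrix.mul_assoc _ _ _).symm
      have h2 : v + (G * Y) * v = 1 := by
        have := huu
        rwa [add_mul, one_mul] at this
      rw [h1]
      rw [← h2, add_sub_cancel_right]
    have hvunit : IsUnit v := isUnit_ringInverse.mpr hu
    refine ⟨hmem, ?_, ?_⟩
    · rw [key]; exact hvunit
    · rw [key]
      have hinv : Ring.inverse v = 1 + G * Y := by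
        calc Ring.inverse v = Ring.inverse v * (v * (1 + G * Y)) := by rw [hvu, mul_one]
          _ = (Ring.inverse v * v) * (1 + G * Y) := (mul_assoc _ _ _).symm
          _ = 1 + G * Y := by rw [Ring.inverse_mul_cancel v hvunit, one_mul]
      rw [hinv, Matrix.mul_assoc, hvu, Matrix.mul_one]
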